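/- arXiv:2005.11230 — 2 statements merged into one kernel-verified Lean document; each statement's English description precedes it below -/
import Mathlib

section
/- Let X be a non-separable Banach space over ℂ and let 0 < M < 1. Then there exists an uncountable index set I and a family {x_α}_{α∈I} ⊆ X of vectors of norm 1 such that for all pairwise distinct indices α_1, …, α_n ∈ I and all nonzero scalars c_1, …, c_n ∈ ℂ\{0}, one has ‖Σ_{i=1}^n c_i x_{α_i}‖ > M · min{ |c_i| : 1 ≤ i ≤ n }. -/
open scoped BigOperators

open Ordinal Cardinal TopologicalSpace Set

section Aux

variable (X : Type*) [NormedAddCommGroup X] [NormedSpace ℂ X]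

/-- Key step: in a non-separable space, given a countable set `s` and `r < 1`, there is a
unit vector at distance at least `r` from the span of `s`. -/
lemma exists_unit_far (hX : ¬ SeparableSpace X) {r : ℝ} (hr : r < 1)
    {s : Set X} (hs : s.Countable) :
    ∃ x : X, ‖x‖ = 1 ∧ ∀ y ∈ Submodule.span ℂ s, r ≤ ‖x - y‖ := by
  set F := (Submodule.span ℂ s).topologicalClosure with hFdef
  have hFc : IsClosed (F : Set X) := Submodule.isClosed_topologicalClosure _
  have hprop : ∃ z : X, z ∉ F := by
    by_contra h
    push_neg at h
    have hsep : IsSeparable (F : Set X) := by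
      rw [hFdef, Submodule.topologicalClosure_coe]
      exact hs.isSeparable.span.closure
    exact hX <| isSeparable_univ_iff.1 <| hsep.mono fun z _ => h z
  obtain ⟨x₀, hx₀F, hx₀⟩ := riesz_lemma hFc hprop hr
  have hx₀0 : x₀ ≠ 0 := fun h0 => hx₀F (h0 ▸ F.zero_mem)
  have hnpos : (0 : ℝ) < ‖x₀‖ := norm_pos_iff.2 hx₀0
  refine ⟨‖x₀‖⁻¹ • x₀, ?_, ?_⟩
  · rw [norm_smul, Real.norm_eq_abs, abs_of_pos (inv_pos.2 hnpos),
      inv_mul_cancel₀ (ne_of_gt hnpos)]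
  · intro y hy
    have hyF : (‖x₀‖ : ℝ) • y ∈ F := by
      rw [← Complex.coe_smul]
      exact F.smul_mem _ (Submodule.le_topologicalClosure _ hy)
    have hEq : ‖x₀‖⁻¹ • x₀ - y = ‖x₀‖⁻¹ • (x₀ - ‖x₀‖ • y) := by
      rw [smul_sub, smul_smul, inv_mul_cancel₀ (ne_of_gt hnpos), one_smul]
    rw [hEq, norm_smul, Real.norm_eq_abs, abs_of_pos (inv_pos.2 hnpos)]
    rw [le_inv_mul_iff₀ hnpos, mul_comm]
    exact hx₀ _ hyF

/-- Choose a unit vector far from the span of `s`, when one exists. -/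
noncomputable def pickVec (r : ℝ) (s : Set X) : X :=
  letI := Classical.propDecidable
  if h : ∃ x : X, ‖x‖ = 1 ∧ ∀ y ∈ Submodule.span ℂ s, r ≤ ‖x - y‖ then h.choose else 0

/-- A transfinite family of unit vectors, each far from the span of the previous ones. -/
noncomputable def famVec (r : ℝ) : Ordinal → X :=
  Ordinal.lt_wf.fix (fun o ih => pickVec X r (Set.range fun p : Set.Iio o => ih p.1 p.2))

lemma famVec_eq (o : Ordinal) :
    famVec X r o = pickVec X r (famVec X r '' Set.Iio o) := by
  rw [Set.image_eq_range]
  exact Ordinal.lt_wf.fix_eq _ o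

lemma famVec_spec (hX : ¬ SeparableSpace X) {r : ℝ} (hr : r < 1) {o : Ordinal}
    (ho : (Set.Iio o).Countable) :
    ‖famVec X r o‖ = 1 ∧
      ∀ y ∈ Submodule.span ℂ (famVec X r '' Set.Iio o), r ≤ ‖famVec X r o - y‖ := by
  have hex := exists_unit_far X hX hr (ho.image (famVec X r))
  rw [famVec_eq, pickVec, dif_pos hex]
  exact hex.choose_spec

end Aux

/-- In a non-separable complex Banach space, for any `0 < M < 1` there is an uncountable
family of unit vectors such that every nontrivial finite linear combination with nonzero
coefficients has norm greater than `M` times the minimum modulus of the coefficients. -/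
theorem exists_uncountable_family_of_not_separable
    (X : Type*) [NormedAddCommGroup X] [NormedSpace ℂ X] [CompleteSpace X]
    (hX : ¬ TopologicalSpace.SeparableSpace X)
    (M : ℝ) (hM0 : 0 < M) (hM1 : M < 1) :
    ∃ (I : Type) (x : I → X), ¬ Countable I ∧ (∀ α, ‖x α‖ = 1) ∧
      ∀ (n : ℕ), 0 < n → ∀ (α : Fin n → I), Function.Injective α →
        ∀ c : Fin n → ℂ, (∀ i, c i ≠ 0) →
          M * (⨅ i, ‖c i‖) < ‖∑ i, c i • x (α i)‖ := by
  classical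
  haveI : IsWellOrder (Cardinal.aleph 1 : Cardinal.{0}).ord.ToType (· < ·) := isWellOrder_lt
  set r : ℝ := (M + 1) / 2 with hrdef
  have hMr : M < r := by rw [hrdef]; linarith
  have hr1 : r < 1 := by rw [hrdef]; linarith
  have hcnt : ∀ a : (Cardinal.aleph 1 : Cardinal.{0}).ord.ToType, (Set.Iio (Ordinal.typein (α := (Cardinal.aleph 1 : Cardinal.{0}).ord.ToType) (· < ·) a)).Countable := by
    intro a
    rw [Cardinal.countable_iff_lt_aleph_one, Ordinal.mk_Iio_ordinal, Cardinal.lift_lt_aleph_one]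
    exact Cardinal.card_typein_toType_lt _ a
  refine ⟨(Cardinal.aleph 1 : Cardinal.{0}).ord.ToType, fun a => famVec X r (Ordinal.typein (α := (Cardinal.aleph 1 : Cardinal.{0}).ord.ToType) (· < ·) a), ?_, ?_, ?_⟩
  · intro hc
    have h1 : #((Cardinal.aleph 1 : Cardinal.{0}).ord.ToType) ≤ Cardinal.aleph0 := Cardinal.mk_le_aleph0_iff.2 hc
    rw [Cardinal.mk_ord_toType] at h1
    exact absurd h1 (not_le.2 Cardinal.aleph0_lt_aleph_one)
  · intro a
    exact (famVec_spec X hX hr1 (hcnt a)).1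
  · intro n hn α hα c hc
    have hne : (Finset.univ : Finset (Fin n)).Nonempty := ⟨⟨0, hn⟩, Finset.mem_univ _⟩
    obtain ⟨k, -, hk⟩ := Finset.exists_max_image Finset.univ
      (fun i => Ordinal.typein (α := (Cardinal.aleph 1 : Cardinal.{0}).ord.ToType) (· < ·) (α i)) hne
    set o : Ordinal := Ordinal.typein (α := (Cardinal.aleph 1 : Cardinal.{0}).ord.ToType) (· < ·) (α k) with hodef
    obtain ⟨hnorm1, hfar⟩ := famVec_spec X hX hr1 (hcnt (α k))
    set v : X := famVec X r o with hvdef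
    set w : X := ∑ i ∈ Finset.univ.erase k, c i • famVec X r (Ordinal.typein (α := (Cardinal.aleph 1 : Cardinal.{0}).ord.ToType) (· < ·) (α i))
      with hwdef
    have hw : w ∈ Submodule.span ℂ (famVec X r '' Set.Iio o) := by
      rw [hwdef]
      refine Submodule.sum_mem _ fun i hi => Submodule.smul_mem _ _ (Submodule.subset_span ?_)
      refine ⟨Ordinal.typein (α := (Cardinal.aleph 1 : Cardinal.{0}).ord.ToType) (· < ·) (α i), ?_, rfl⟩
      have hne' : α i ≠ α k := fun h => (Finset.ne_of_mem_erase hi) (hα h)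
      have hle := hk i (Finset.mem_univ i)
      exact lt_of_le_of_ne hle (fun h => hne' ((Ordinal.typein_inj _).1 h))
    have hsum : ∑ i, c i • famVec X r (Ordinal.typein (α := (Cardinal.aleph 1 : Cardinal.{0}).ord.ToType) (· < ·) (α i))
        = c k • v + w := (Finset.add_sum_erase _ _ (Finset.mem_univ k)).symm
    have hck : c k ≠ 0 := hc k
    have habs : (0 : ℝ) < ‖c k‖ := norm_pos_iff.2 hck
    have key : r * ‖c k‖ ≤ ‖c k • v + w‖ := by
      have hre : c k • v + w = c k • (v + (c k)⁻¹ • w) := by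
        rw [smul_add, smul_inv_smul₀ hck]
      rw [hre, norm_smul, mul_comm]
      refine mul_le_mul_of_nonneg_left ?_ (norm_nonneg _)
      have hmem : -((c k)⁻¹ • w) ∈ Submodule.span ℂ (famVec X r '' Set.Iio o) :=
        Submodule.neg_mem _ (Submodule.smul_mem _ _ hw)
      have := hfar _ hmem
      rwa [sub_neg_eq_add] at this
    have hinf : (⨅ i, ‖c i‖) ≤ ‖c k‖ := by
      refine ciInf_le ⟨0, ?_⟩ k
      rintro y ⟨i, rfl⟩
      exact norm_nonneg _
    calc M * (⨅ i, ‖c i‖) ≤ M * ‖c k‖ :=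
          mul_le_mul_of_nonneg_left hinf hM0.le
      _ < r * ‖c k‖ := mul_lt_mul_of_pos_right hMr habs
      _ ≤ ‖c k • v + w‖ := key
      _ = ‖∑ i, c i • famVec X r (Ordinal.typein (α := (Cardinal.aleph 1 : Cardinal.{0}).ord.ToType) (· < ·) (α i))‖ := by rw [hsum]
end

section
/- Let (G,S,p,ω,Γ) be an admissible tuple and suppose that for every compact subset K ⊆ G and all ε, δ > 0, there exist s ∈ S, λ ∈ Γ\{0} and a compact subset E ⊆ K such that μ(K \ E) < δ, |λ|·ess sup_{sE} ω < ε, and (1/|λ|)·ess sup_{s⁻¹E} ω < ε. Then, for every compact set L ⊆ G, s can in addition be chosen outside L; that is, for every compact K ⊆ G, compact L ⊆ G and all ε, δ > 0, there exist s ∈ S\L, λ ∈ Γ\{0} and a compact E ⊆ K with μ(K \ E) < δ, |λ|·ess sup_{sE} ω < ε and (1/|λ|)·ess sup_{s⁻¹E} ω < ε. -/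
open MeasureTheory ENNReal Set Pointwise Filter

noncomputable section

/-- Left translation operator `(T_s f)(t) = f (s⁻¹ t)`. -/
def transl {G : Type*} [Group G] (s : G) (f : G → ℂ) : G → ℂ := fun t => f (s⁻¹ * t)

/-- Weighted `L^p` norm `‖f‖_{p,ω}` as an extended nonnegative real. -/
def wNorm {G : Type*} [MeasurableSpace G] (μ : Measure G) (p : ℝ) (ω : G → ℝ)
    (f : G → ℂ) : ℝ≥0∞ :=
  (∫⁻ t, (‖f t‖₊ : ℝ≥0∞) ^ p * (ENNReal.ofReal (ω t)) ^ p ∂μ) ^ (1 / p)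

/-- Membership in the weighted space `L^p(G,ω)`. -/
def MemWLp {G : Type*} [MeasurableSpace G] (μ : Measure G) (p : ℝ) (ω : G → ℝ)
    (f : G → ℂ) : Prop :=
  AEMeasurable f μ ∧ wNorm μ p ω f < ⊤

/-- Local norm `‖g‖_{p,K}` of a nonnegative function over a subset `K`. -/
def locNorm {G : Type*} [MeasurableSpace G] (μ : Measure G) (p : ℝ) (g : G → ℝ)
    (K : Set G) : ℝ≥0∞ :=
  (∫⁻ t in K, (ENNReal.ofReal (g t)) ^ p ∂μ) ^ (1 / p)

/-- `ω` is an `S`-admissible weight: every left translation by `s ∈ S` is bounded. -/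
def SAdmissible {G : Type*} [Group G] [MeasurableSpace G] (μ : Measure G) (ω : G → ℝ)
    (S : Set G) : Prop :=
  ∀ s ∈ S, essSup (fun t => ENNReal.ofReal (ω (s * t) / ω t)) μ < ⊤

/-- `ω` is locally `p`-integrable. -/
def LocPIntegrable {G : Type*} [TopologicalSpace G] [MeasurableSpace G] (μ : Measure G)
    (p : ℝ) (ω : G → ℝ) : Prop :=
  ∀ K : Set G, IsCompact K → ∫⁻ t in K, (ENNReal.ofReal (ω t)) ^ p ∂μ < ⊤

/-- `f` is a `(Γ,S)`-dense vector in `L^p(G,ω)`. -/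
def GammaSDense {G : Type*} [Group G] [MeasurableSpace G] (μ : Measure G) (p : ℝ)
    (ω : G → ℝ) (Γ : Set ℂ) (S : Set G) (f : G → ℂ) : Prop :=
  MemWLp μ p ω f ∧
    ∀ g : G → ℂ, MemWLp μ p ω g → ∀ ε : ℝ, 0 < ε →
      ∃ lam ∈ Γ, ∃ s ∈ S,
        wNorm μ p ω (fun t => lam * transl s f t - g t) < ENNReal.ofReal ε

/-- `f` is an `S`-dense vector in `L^p(G,ω)`. -/
def SDense {G : Type*} [Group G] [MeasurableSpace G] (μ : Measure G) (p : ℝ)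
    (ω : G → ℝ) (S : Set G) (f : G → ℂ) : Prop :=
  MemWLp μ p ω f ∧
    ∀ g : G → ℂ, MemWLp μ p ω g → ∀ ε : ℝ, 0 < ε →
      ∃ s ∈ S, wNorm μ p ω (fun t => transl s f t - g t) < ENNReal.ofReal ε


section Aux

open MeasureTheory ENNReal Set Pointwise Filter

private lemma ennreal_dichotomy {a b r e : ℝ≥0∞} (hr0 : r ≠ 0) (hrT : r ≠ ⊤)
    (he0 : e ≠ 0) (heT : e ≠ ⊤) (h1 : r * a < e) (h2 : r⁻¹ * b < e) :
    a < e ∨ b < e := by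
  by_contra h
  push_neg at h
  obtain ⟨ha, hb⟩ := h
  have hab : e * e ≤ a * b := mul_le_mul' ha hb
  have key : (r * a) * (r⁻¹ * b) = a * b := by
    rw [mul_mul_mul_comm, ENNReal.mul_inv_cancel hr0 hrT, one_mul]
  have hraT : r * a ≠ ⊤ := h1.ne_top
  have hlt : (r * a) * (r⁻¹ * b) < e * e := by
    calc (r * a) * (r⁻¹ * b) ≤ (r * a) * e := by
          exact mul_le_mul_right h2.le _
      _ = e * (r * a) := mul_comm _ _
      _ < e * e := (ENNReal.mul_lt_mul_iff_right he0 heT).mpr h1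
  rw [key] at hlt
  exact absurd (lt_of_le_of_lt hab hlt) (lt_irrefl _)

private lemma lemA {G : Type*} [Group G] [TopologicalSpace G] [IsTopologicalGroup G]
    [MeasurableSpace G] [BorelSpace G]
    (μ : Measure G) [μ.IsHaarMeasure]
    (S : Set G) (ω : G → ℝ) (hpos : ∀ t, 0 < ω t) (Γ : Set ℂ)
    (hyp : ∀ K : Set G, IsCompact K → ∀ ε δ : ℝ, 0 < ε → 0 < δ →
      ∃ s ∈ S, ∃ lam ∈ Γ \ {0}, ∃ E : Set G, IsCompact E ∧ E ⊆ K ∧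
        μ (K \ E) < ENNReal.ofReal δ ∧
        ENNReal.ofReal (‖lam‖) *
          essSup (fun t => ENNReal.ofReal (ω t)) (μ.restrict (s • E)) <
            ENNReal.ofReal ε ∧
        (ENNReal.ofReal (‖lam‖))⁻¹ *
          essSup (fun t => ENNReal.ofReal (ω t)) (μ.restrict (s⁻¹ • E)) <
            ENNReal.ofReal ε)
    (K : Set G) (hK : IsCompact K) (L : Set G) (hL : IsCompact L)
    (ε δ : ℝ) (hε : 0 < ε) (hδ : 0 < δ) (hδK : ENNReal.ofReal δ < μ K) :
    ∃ s ∈ S \ L, ∃ lam ∈ Γ \ {0}, ∃ E : Set G, IsCompact E ∧ E ⊆ K ∧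
      μ (K \ E) < ENNReal.ofReal δ ∧
      ENNReal.ofReal (‖lam‖) *
        essSup (fun t => ENNReal.ofReal (ω t)) (μ.restrict (s • E)) <
          ENNReal.ofReal ε ∧
      (ENNReal.ofReal (‖lam‖))⁻¹ *
        essSup (fun t => ENNReal.ofReal (ω t)) (μ.restrict (s⁻¹ • E)) <
          ENNReal.ofReal ε := by
  classical
  by_contra hcon
  -- choose witnesses for each n with ε_n = min ε (1/(n+1))
  have hεn : ∀ n : ℕ, (0:ℝ) < min ε (1 / (n + 1)) := by
    intro n
    refine lt_min hε (by positivity)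
  have H : ∀ n : ℕ, ∃ s ∈ S, ∃ lam ∈ Γ \ {0}, ∃ E : Set G, IsCompact E ∧ E ⊆ K ∧
      μ (K \ E) < ENNReal.ofReal δ ∧
      ENNReal.ofReal (‖lam‖) *
        essSup (fun t => ENNReal.ofReal (ω t)) (μ.restrict (s • E)) <
          ENNReal.ofReal (min ε (1 / (n + 1))) ∧
      (ENNReal.ofReal (‖lam‖))⁻¹ *
        essSup (fun t => ENNReal.ofReal (ω t)) (μ.restrict (s⁻¹ • E)) <
          ENNReal.ofReal (min ε (1 / (n + 1))) :=
    fun n => hyp K hK (min ε (1 / (n + 1))) δ (hεn n) hδ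
  choose s hsS lam hlam E hEc hEK hEδ h1 h2 using H
  have hsL : ∀ n, s n ∈ L := by
    intro n
    by_contra hnL
    exact hcon ⟨s n, ⟨hsS n, hnL⟩, lam n, hlam n, E n, hEc n, hEK n, hEδ n,
      lt_of_lt_of_le (h1 n) (ENNReal.ofReal_le_ofReal (min_le_left _ _)),
      lt_of_lt_of_le (h2 n) (ENNReal.ofReal_le_ofReal (min_le_left _ _))⟩
  set m : ℝ≥0∞ := μ K - ENNReal.ofReal δ with hm_def
  have hm : 0 < m := tsub_pos_of_lt hδK
  set C : Set G := L * K ∪ L⁻¹ * K with hC_def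
  have hC : IsCompact C := (hL.mul hK).union (hL.inv.mul hK)
  have hCfin : μ C ≠ ⊤ := hC.measure_lt_top.ne
  have hμE : ∀ n, m ≤ μ (E n) := by
    intro n
    have hsub : K ⊆ (K \ E n) ∪ E n := by
      intro x hx
      by_cases h : x ∈ E n
      · exact Or.inr h
      · exact Or.inl ⟨hx, h⟩
    have : μ K ≤ μ (K \ E n) + μ (E n) :=
      (measure_mono hsub).trans (measure_union_le _ _)
    have h' : μ K ≤ μ (E n) + ENNReal.ofReal δ :=
      this.trans (by rw [add_comm]; exact add_le_add_right (hEδ n).le _)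
    exact tsub_le_iff_right.mpr h'
  -- for each n, pick the good translate A n
  have key : ∀ n : ℕ, ∃ A : Set G, A ⊆ C ∧ m ≤ μ A ∧
      essSup (fun t => ENNReal.ofReal (ω t)) (μ.restrict A) <
        ENNReal.ofReal (min ε (1 / (n + 1))) := by
    intro n
    have hlam0 : ‖lam n‖ ≠ 0 := by
      have := (hlam n).2
      simp only [Set.mem_singleton_iff] at this
      simpa using this
    have hr0 : ENNReal.ofReal (‖lam n‖) ≠ 0 := by
      have habs : 0 < ‖lam n‖ :=
        lt_of_le_of_ne (norm_nonneg _) (Ne.symm hlam0)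
      exact (ENNReal.ofReal_pos.mpr habs).ne'
    have hrT : ENNReal.ofReal (‖lam n‖) ≠ ⊤ := ENNReal.ofReal_ne_top
    have he0 : ENNReal.ofReal (min ε (1 / (n + 1))) ≠ 0 :=
      (ENNReal.ofReal_pos.mpr (hεn n)).ne'
    have heT : ENNReal.ofReal (min ε (1 / (n + 1))) ≠ ⊤ := ENNReal.ofReal_ne_top
    rcases ennreal_dichotomy hr0 hrT he0 heT (h1 n) (h2 n) with ha | hb
    · refine ⟨s n • E n, ?_, ?_, ha⟩
      · intro x hx
        obtain ⟨e, he, rfl⟩ := hx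
        exact Or.inl (Set.mul_mem_mul (hsL n) (hEK n he))
      · rw [measure_smul]
        exact hμE n
    · refine ⟨(s n)⁻¹ • E n, ?_, ?_, hb⟩
      · intro x hx
        obtain ⟨e, he, rfl⟩ := hx
        exact Or.inr (Set.mul_mem_mul (Set.inv_mem_inv.mpr (hsL n)) (hEK n he))
      · rw [measure_smul]
        exact hμE n
  choose A hAC hAm hAe using key
  have hAfin : ∀ n, μ (A n) ≠ ⊤ :=
    fun n => ((measure_mono (hAC n)).trans_lt hC.measure_lt_top).ne
  -- bad sets and their hulls
  set N : ℕ → Set G := fun n =>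
    {t | ¬ ENNReal.ofReal (ω t) < ENNReal.ofReal (min ε (1 / (n + 1)))} with hN_def
  have hN0 : ∀ n, (μ.restrict (A n)) (N n) = 0 := by
    intro n
    have hae := ae_lt_of_essSup_lt (hAe n)
    exact ae_iff.mp hae
  set T : ℕ → Set G := fun n => toMeasurable (μ.restrict (A n)) (N n) with hT_def
  have hTmeas : ∀ n, MeasurableSet (T n) := fun n => measurableSet_toMeasurable _ _
  have hNT : ∀ n, N n ⊆ T n := fun n => subset_toMeasurable _ _
  have hT0 : ∀ n, μ (T n ∩ A n) = 0 := by
    intro n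
    rw [← Measure.restrict_apply (hTmeas n), hT_def]
    rw [measure_toMeasurable]
    exact hN0 n
  have hT0' : ∀ n, μ (T n ∩ toMeasurable μ (A n)) = 0 := by
    intro n
    rw [Set.inter_comm, Measure.measure_toMeasurable_inter (hTmeas n) (hAfin n),
      Set.inter_comm]
    exact hT0 n
  set F : ℕ → Set G := fun n => (toMeasurable μ (A n) ∩ toMeasurable μ C) \ T n with hF_def
  have hFmeas : ∀ n, MeasurableSet (F n) := fun n =>
    ((measurableSet_toMeasurable _ _).inter (measurableSet_toMeasurable _ _)).diff (hTmeas n)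
  have hFm : ∀ n, m ≤ μ (F n) := by
    intro n
    have hsub : A n ⊆ F n ∪ (T n ∩ toMeasurable μ (A n)) := by
      intro x hx
      by_cases hxT : x ∈ T n
      · exact Or.inr ⟨hxT, subset_toMeasurable μ _ hx⟩
      · exact Or.inl ⟨⟨subset_toMeasurable μ _ hx, subset_toMeasurable μ _ (hAC n hx)⟩, hxT⟩
    have h' : μ (A n) ≤ μ (F n) + μ (T n ∩ toMeasurable μ (A n)) :=
      (measure_mono hsub).trans (measure_union_le _ _)
    rw [hT0' n, add_zero] at h'
    exact (hAm n).trans h'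
  have hFC : ∀ n, F n ⊆ toMeasurable μ C := fun n x hx => hx.1.2
  set D : ℕ → Set G := fun n => ⋃ k, F (n + k) with hD_def
  have hDmeas : ∀ n, MeasurableSet (D n) := fun n => MeasurableSet.iUnion fun k => hFmeas _
  have hDanti : Antitone D := by
    intro a b hab x hx
    obtain ⟨k, hk⟩ := mem_iUnion.mp hx
    have hbk : b + k = a + (b - a + k) := by omega
    exact mem_iUnion.mpr ⟨b - a + k, by rwa [← hbk]⟩
  have hDfin : μ (D 0) ≠ ⊤ := by
    have : D 0 ⊆ toMeasurable μ C := by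
      intro x hx
      obtain ⟨k, hk⟩ := mem_iUnion.mp hx
      exact hFC _ hk
    refine ((measure_mono this).trans_lt ?_).ne
    rw [measure_toMeasurable]
    exact hC.measure_lt_top
  have hDm : ∀ n, m ≤ μ (D n) := by
    intro n
    refine (hFm n).trans (measure_mono ?_)
    exact subset_iUnion (fun k => F (n + k)) 0
  have htendsto := tendsto_measure_iInter_atTop
    (fun n => (hDmeas n).nullMeasurableSet) hDanti ⟨0, hDfin⟩
  have hInter : m ≤ μ (⋂ n, D n) := ge_of_tendsto' htendsto hDm
  have hne : (⋂ n, D n).Nonempty :=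
    nonempty_of_measure_ne_zero (lt_of_lt_of_le hm hInter).ne'
  obtain ⟨x, hx⟩ := hne
  have hωx : ∀ n : ℕ, ω x < 1 / (n + 1) := by
    intro n
    have hxD := mem_iInter.mp hx n
    obtain ⟨k, hk⟩ := mem_iUnion.mp hxD
    have hxnotT : x ∉ T (n + k) := hk.2
    have hxN : x ∉ N (n + k) := fun h => hxnotT (hNT (n + k) h)
    have hlt : ENNReal.ofReal (ω x) < ENNReal.ofReal (min ε (1 / (↑(n + k) + 1))) := by
      simpa [hN_def, Set.mem_setOf_eq, not_not] using hxN
    have h2 : ω x < min ε (1 / (↑(n + k) + 1)) :=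
      (ENNReal.ofReal_lt_ofReal_iff_of_nonneg (hpos x).le).mp hlt
    have h3 : (1:ℝ) / (↑(n + k) + 1) ≤ 1 / (↑n + 1) := by
      apply one_div_le_one_div_of_le
      · positivity
      · push_cast
        linarith [Nat.cast_nonneg (α := ℝ) k]
    exact lt_of_lt_of_le h2 ((min_le_right _ _).trans h3)
  obtain ⟨n, hn⟩ := exists_nat_one_div_lt (hpos x)
  exact absurd (hωx n) (not_lt.mpr hn.le)

end Aux


variable {G : Type*} [Group G] [TopologicalSpace G] [IsTopologicalGroup G]
  [LocallyCompactSpace G] [SecondCountableTopology G]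
  [MeasurableSpace G] [BorelSpace G]

/-- Under the sufficient condition of Theorem 18, the translation `s` can in addition
be chosen outside any prescribed compact set `L`. -/
theorem essSup_small_outside_compact
    (hnc : ¬ CompactSpace G) (μ : Measure G) [μ.IsHaarMeasure]
    (S : Set G) (p : ℝ) (hp : 1 ≤ p)
    (ω : G → ℝ) (hpos : ∀ t, 0 < ω t)
    (Γ : Set ℂ) (hΓ : (Γ \ {0}).Nonempty)
    (hloc : LocPIntegrable μ p ω) (hadm : SAdmissible μ ω S)
    (hyp : ∀ K : Set G, IsCompact K → ∀ ε δ : ℝ, 0 < ε → 0 < δ →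
      ∃ s ∈ S, ∃ lam ∈ Γ \ {0}, ∃ E : Set G, IsCompact E ∧ E ⊆ K ∧
        μ (K \ E) < ENNReal.ofReal δ ∧
        ENNReal.ofReal (‖lam‖) *
          essSup (fun t => ENNReal.ofReal (ω t)) (μ.restrict (s • E)) <
            ENNReal.ofReal ε ∧
        (ENNReal.ofReal (‖lam‖))⁻¹ *
          essSup (fun t => ENNReal.ofReal (ω t)) (μ.restrict (s⁻¹ • E)) <
            ENNReal.ofReal ε) :
    ∀ K : Set G, IsCompact K → ∀ L : Set G, IsCompact L →
      ∀ ε δ : ℝ, 0 < ε → 0 < δ →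
        ∃ s ∈ S \ L, ∃ lam ∈ Γ \ {0}, ∃ E : Set G, IsCompact E ∧ E ⊆ K ∧
          μ (K \ E) < ENNReal.ofReal δ ∧
          ENNReal.ofReal (‖lam‖) *
            essSup (fun t => ENNReal.ofReal (ω t)) (μ.restrict (s • E)) <
              ENNReal.ofReal ε ∧
          (ENNReal.ofReal (‖lam‖))⁻¹ *
            essSup (fun t => ENNReal.ofReal (ω t)) (μ.restrict (s⁻¹ • E)) <
              ENNReal.ofReal ε := by
  intro K hK L hL ε δ hε hδ
  by_cases hKμ : μ K = 0
  · -- use an auxiliary compact set of positive measure to find `s ∉ L`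
    obtain ⟨K₁, hK₁c, hK₁n⟩ := exists_compact_mem_nhds (1 : G)
    have hK₁pos : 0 < μ K₁ := Measure.measure_pos_of_mem_nhds μ hK₁n
    have hK₁fin : μ K₁ ≠ ⊤ := hK₁c.measure_lt_top.ne
    set δ₁ : ℝ := (μ K₁).toReal / 2 with hδ₁_def
    have hδ₁pos : 0 < δ₁ := by
      have := ENNReal.toReal_pos hK₁pos.ne' hK₁fin
      positivity
    have hδ₁K : ENNReal.ofReal δ₁ < μ K₁ := by
      have heq : ENNReal.ofReal δ₁ = μ K₁ / 2 := by
        rw [hδ₁_def, ENNReal.ofReal_div_of_pos two_pos, ENNReal.ofReal_toReal hK₁fin]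
        norm_num
      rw [heq]
      exact ENNReal.half_lt_self hK₁pos.ne' hK₁fin
    obtain ⟨s, hsSL, lam, hlamΓ, E₁, -⟩ :=
      lemA μ S ω hpos Γ hyp K₁ hK₁c L hL ε δ₁ hε hδ₁pos hδ₁K
    refine ⟨s, hsSL, lam, hlamΓ, ∅, isCompact_empty, empty_subset K, ?_, ?_, ?_⟩
    · rw [Set.diff_empty, hKμ]
      exact ENNReal.ofReal_pos.mpr hδ
    · rw [Set.smul_set_empty, Measure.restrict_empty, essSup_measure_zero]
      simpa using ENNReal.ofReal_pos.mpr hε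
    · rw [Set.smul_set_empty, Measure.restrict_empty, essSup_measure_zero]
      simpa using ENNReal.ofReal_pos.mpr hε
  · have hKpos : 0 < μ K := lt_of_le_of_ne zero_le (Ne.symm hKμ)
    have hKfin : μ K ≠ ⊤ := hK.measure_lt_top.ne
    set δ' : ℝ := min δ ((μ K).toReal / 2) with hδ'_def
    have hδ'pos : 0 < δ' := by
      have := ENNReal.toReal_pos hKpos.ne' hKfin
      exact lt_min hδ (by positivity)
    have hδ'K : ENNReal.ofReal δ' < μ K := by
      have heq : ENNReal.ofReal ((μ K).toReal / 2) = μ K / 2 := by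
        rw [ENNReal.ofReal_div_of_pos two_pos, ENNReal.ofReal_toReal hKfin]
        norm_num
      calc ENNReal.ofReal δ' ≤ ENNReal.ofReal ((μ K).toReal / 2) :=
            ENNReal.ofReal_le_ofReal (min_le_right _ _)
        _ = μ K / 2 := heq
        _ < μ K := ENNReal.half_lt_self hKpos.ne' hKfin
    obtain ⟨s, hsSL, lam, hlamΓ, E, hEc, hEK, hEδ, hb1, hb2⟩ :=
      lemA μ S ω hpos Γ hyp K hK L hL ε δ' hε hδ'pos hδ'K
    exact ⟨s, hsSL, lam, hlamΓ, E, hEc, hEK,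
      lt_of_lt_of_le hEδ (ENNReal.ofReal_le_ofReal (min_le_left _ _)), hb1, hb2⟩
end
end
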